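/- For an m-vertex directed cycle 1→2→⋯→m→1 (m ≥ 2), there exist real matrices C_1,…,C_m, each with n columns and each with nonzero kernel, such that the relations C_i(x_i − x_{i−1}) = 0 for all i ∈ {1,…,m} (indices mod m) imply x_1 = ⋯ = x_m for all x_1,…,x_m ∈ ℝ^n, if and only if m ≤ n. -/

import Mathlib

private lemma fin_sub_one_val {m : ℕ} [NeZero m] (a : Fin m) :
    (a - 1).val = if a = 0 then m - 1 else a.val - 1 := by
  rcases Nat.exists_eq_succ_of_ne_zero (NeZero.ne m) with ⟨k, rfl⟩
  exact Fin.coe_sub_one a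

open Fin.NatCast in
theorem stmt_2 (m n : ℕ) [NeZero m] (hm : 2 ≤ m) :
    (∃ (k : Fin m → ℕ) (C : (i : Fin m) → Matrix (Fin (k i)) (Fin n) ℝ),
        (∀ i : Fin m, LinearMap.ker (C i).mulVecLin ≠ ⊥) ∧
        ∀ x : Fin m → (Fin n → ℝ),
          (∀ i : Fin m, (C i).mulVec (x i - x (i - 1)) = 0) → ∀ i j, x i = x j)
      ↔ m ≤ n := by
  constructor
  · rintro ⟨k, C, hker, hwc⟩
    by_contra hmn
    push_neg at hmn
    -- pick nonzero kernel vectors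
    have hv : ∀ i : Fin m, ∃ v : Fin n → ℝ, v ∈ LinearMap.ker (C i).mulVecLin ∧ v ≠ 0 :=
      fun i => (Submodule.ne_bot_iff _).mp (hker i)
    choose v hvker hvne using hv
    -- they are linearly dependent since m > n
    have hnli : ¬ LinearIndependent ℝ v := by
      intro h
      have := h.fintype_card_le_finrank
      rw [Module.finrank_fin_fun, Fintype.card_fin] at this
      omega
    rw [Fintype.not_linearIndependent_iff] at hnli
    obtain ⟨g, hg0, i₀, hgi₀⟩ := hnli
    set d : Fin m → (Fin n → ℝ) := fun i => g i • v i with hd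
    have hdsum : ∑ i : Fin m, d i = 0 := hg0
    set x : Fin m → (Fin n → ℝ) := fun j => ∑ i ∈ Finset.range j.val, d ↑(i + 1) with hx
    have hdiff : ∀ j : Fin m, x j - x (j - 1) = d j := by
      intro j
      by_cases hj : j = 0
      · subst hj
        have h0 : (0 - 1 : Fin m).val = m - 1 := by rw [fin_sub_one_val]; simp
        have hm1 : m - 1 + 1 = m := Nat.succ_pred_eq_of_pos (Nat.pos_of_ne_zero (NeZero.ne m))
        have hsum0 : ∑ i ∈ Finset.range m, d ↑i = 0 := by
          rw [← Fin.sum_univ_eq_sum_range]; simpa using hdsum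
        have h2 : (∑ i ∈ Finset.range (m - 1), d ↑(i + 1)) + d ↑(0 : ℕ) = 0 := by
          have h3 := Finset.sum_range_succ' (fun i => d ↑i) (m - 1)
          rw [hm1] at h3
          exact h3.symm.trans hsum0
        have hx0m : x (0 - 1) = - d 0 := by
          rw [hx]; simp only [h0]
          have := eq_neg_of_add_eq_zero_left h2
          simpa using this
        rw [hx0m]
        simp [hx]
      · have hjv : (j - 1).val = j.val - 1 := by rw [fin_sub_one_val, if_neg hj]
        have hjp : 0 < j.val := Nat.pos_of_ne_zero (fun h => hj (Fin.ext h))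
        have : j.val = (j - 1).val + 1 := by omega
        rw [hx]
        simp only [this, Finset.sum_range_succ]
        have : (↑((j - 1).val + 1) : Fin m) = j := by
          rw [← this, Fin.cast_val_eq_self]
        rw [this]
        abel
    have hrel : ∀ i : Fin m, (C i).mulVec (x i - x (i - 1)) = 0 := by
      intro i
      rw [hdiff i, hd]
      have := hvker i
      rw [LinearMap.mem_ker] at this
      simp only [Matrix.mulVec_smul]
      rw [show (C i).mulVec (v i) = (C i).mulVecLin (v i) from rfl, this, smul_zero]
    have := hwc x hrel i₀ (i₀ - 1)
    have hzero : d i₀ = 0 := by rw [← hdiff i₀, this, sub_self]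
    exact smul_ne_zero hgi₀ (hvne i₀) hzero
  · intro hmn
    refine ⟨fun _ => n, fun i => Matrix.diagonal (fun j => if j = Fin.castLE hmn i then 0 else 1),
      ?_, ?_⟩
    · intro i
      rw [Submodule.ne_bot_iff]
      refine ⟨Pi.single (Fin.castLE hmn i) 1, ?_, ?_⟩
      · rw [LinearMap.mem_ker]
        ext j
        simp only [Matrix.mulVecLin_apply, Matrix.mulVec_diagonal, Pi.single_apply,
          Pi.zero_apply]
        split <;> simp_all
      · intro h
        have := congrFun h (Fin.castLE hmn i)
        simp at this
    · intro x hrel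
      -- coordinates off the special one agree
      have hcoord : ∀ i : Fin m, ∀ j : Fin n, j ≠ Fin.castLE hmn i →
          x i j = x (i - 1) j := by
        intro i j hj
        have := congrFun (hrel i) j
        rw [Matrix.mulVec_diagonal, if_neg hj, one_mul] at this
        simpa [sub_eq_zero] using this
      -- telescoping sum is zero
      have hsum : ∑ i : Fin m, (x i - x (i - 1)) = 0 := by
        rw [Finset.sum_sub_distrib]
        rw [sub_eq_zero]
        exact (Fintype.sum_equiv (Equiv.subRight (1 : Fin m)) _ _ (fun i => rfl)).symm
      -- hence each step is zero
      have hstep : ∀ i : Fin m, x i = x (i - 1) := by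
        intro i₀
        funext j
        by_cases hj : j = Fin.castLE hmn i₀
        · have := congrFun hsum j
          simp only [Finset.sum_apply, Pi.zero_apply, Pi.sub_apply] at this
          rw [Finset.sum_eq_single i₀] at this
          · linarith [this]
          · intro b _ hb
            rw [hcoord b j (by rw [hj]; exact fun h => hb (Fin.castLE_injective hmn h).symm)]
            ring
          · simp
        · exact hcoord i₀ j hj
      -- constancy around the cycle
      have hconst : ∀ k : ℕ, x ↑k = x 0 := by
        intro k
        induction k with
        | zero => simp
        | succ k ih =>
          have : ((k + 1 : ℕ) : Fin m) - 1 = (k : ℕ) := by push_cast; exact add_sub_cancel_right _ _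
          rw [← ih, ← this]
          exact hstep _
      intro i j
      rw [← Fin.cast_val_eq_self i, ← Fin.cast_val_eq_self j, hconst, hconst]
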